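/- Let M : [0,1] → ℝ be continuous with M(x) ≥ ε > 0 and let K₁, K₂ : [0,1]² → ℝ be continuous with |K₁(x,y)| < ε and |K₂(x,y)| < ε for all (x,y) ∈ [0,1]². Define 𝒫 = 𝒯 + 𝒮 where (𝒯w)(x) = M(x)w(x) and (𝒮w)(x) = ∫₀ˣ K₁(x,y)w(y)dy + ∫ₓ¹ K₂(x,y)w(y)dy. Then 𝒫 is invertible on L²(0,1) and 𝒫⁻¹ = (∑ₖ₌₀^∞ (−𝒯⁻¹𝒮)ᵏ) 𝒯⁻¹ with (𝒯⁻¹w)(x) = M(x)⁻¹w(x). -/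

import Mathlib

open MeasureTheory intervalIntegral

/-- Theorem 3 of the paper: `𝒫 = 𝒯 + 𝒮`, where `𝒯` is multiplication by `M ≥ ε > 0` and `𝒮`
is the integral operator with semi-separable kernel bounded by `ε` in absolute value, is
invertible on `L²(0,1)` with `𝒫⁻¹ = (∑ₖ (−𝒯⁻¹𝒮)ᵏ)𝒯⁻¹`. -/
theorem inverse_of_positive_operator
    (μ : Measure ℝ) (hμ : μ = volume.restrict (Set.Ioc (0:ℝ) 1))
    (M : ℝ → ℝ) (hM : Continuous M) (ε : ℝ) (hε : 0 < ε)
    (hMε : ∀ x ∈ Set.Icc (0:ℝ) 1, ε ≤ M x)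
    (K₁ K₂ : ℝ → ℝ → ℝ)
    (hK₁ : Continuous fun p : ℝ × ℝ => K₁ p.1 p.2)
    (hK₂ : Continuous fun p : ℝ × ℝ => K₂ p.1 p.2)
    (hK₁ε : ∀ x ∈ Set.Icc (0:ℝ) 1, ∀ y ∈ Set.Icc (0:ℝ) 1, |K₁ x y| < ε)
    (hK₂ε : ∀ x ∈ Set.Icc (0:ℝ) 1, ∀ y ∈ Set.Icc (0:ℝ) 1, |K₂ x y| < ε)
    (T S Tinv : Lp ℝ 2 μ →L[ℝ] Lp ℝ 2 μ)
    (hT : ∀ w : Lp ℝ 2 μ, (T w : ℝ → ℝ) =ᵐ[μ] fun x => M x * w x)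
    (hS : ∀ w : Lp ℝ 2 μ, (S w : ℝ → ℝ) =ᵐ[μ]
      fun x => (∫ y in (0:ℝ)..x, K₁ x y * w y) + ∫ y in x..(1:ℝ), K₂ x y * w y)
    (hTinv : ∀ w : Lp ℝ 2 μ, (Tinv w : ℝ → ℝ) =ᵐ[μ] fun x => (M x)⁻¹ * w x) :
    ∃ Pinv : Lp ℝ 2 μ →L[ℝ] Lp ℝ 2 μ,
      ((T + S) * Pinv = 1 ∧ Pinv * (T + S) = 1) ∧
      Pinv = (∑' k : ℕ, (-(Tinv * S)) ^ k) * Tinv := by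
  haveI : IsProbabilityMeasure μ := by
    constructor
    rw [hμ, Measure.restrict_apply_univ, Real.volume_Ioc]
    norm_num
  have hmem : ∀ᵐ x ∂μ, x ∈ Set.Ioc (0:ℝ) 1 := by
    rw [hμ]; exact ae_restrict_mem measurableSet_Ioc
  -- the kernel bound `c < ε`
  have hQne : (Set.Icc (0:ℝ) 1 ×ˢ Set.Icc (0:ℝ) 1).Nonempty := ⟨(0,0), by norm_num⟩
  have hQc : IsCompact (Set.Icc (0:ℝ) 1 ×ˢ Set.Icc (0:ℝ) 1) :=
    isCompact_Icc.prod isCompact_Icc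
  obtain ⟨p₁, hp₁Q, hp₁⟩ := hQc.exists_isMaxOn hQne
    ((hK₁.abs).continuousOn : ContinuousOn (fun p : ℝ × ℝ => |K₁ p.1 p.2|) _)
  obtain ⟨p₂, hp₂Q, hp₂⟩ := hQc.exists_isMaxOn hQne
    ((hK₂.abs).continuousOn : ContinuousOn (fun p : ℝ × ℝ => |K₂ p.1 p.2|) _)
  set c : ℝ := max (|K₁ p₁.1 p₁.2|) (|K₂ p₂.1 p₂.2|) with hcdef
  have hc : 0 ≤ c := le_trans (abs_nonneg _) (le_max_left _ _)
  have hcε : c < ε :=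
    max_lt (hK₁ε _ hp₁Q.1 _ hp₁Q.2) (hK₂ε _ hp₂Q.1 _ hp₂Q.2)
  have hbd₁ : ∀ x ∈ Set.Icc (0:ℝ) 1, ∀ y ∈ Set.Icc (0:ℝ) 1, |K₁ x y| ≤ c :=
    fun x hx y hy => le_trans (hp₁ (Set.mk_mem_prod hx hy)) (le_max_left _ _)
  have hbd₂ : ∀ x ∈ Set.Icc (0:ℝ) 1, ∀ y ∈ Set.Icc (0:ℝ) 1, |K₂ x y| ≤ c :=
    fun x hx y hy => le_trans (hp₂ (Set.mk_mem_prod hx hy)) (le_max_right _ _)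
  -- bound on ‖Tinv‖
  have hTinv_norm : ‖Tinv‖ ≤ ε⁻¹ := by
    refine ContinuousLinearMap.opNorm_le_bound _ (inv_nonneg.2 hε.le) fun w => ?_
    have hb : ∀ᵐ x ∂μ, ‖(M x)⁻¹ * w x‖ ≤ ‖ε⁻¹ * w x‖ := by
      filter_upwards [hmem] with x hx
      have hMx : ε ≤ M x := hMε x ⟨hx.1.le, hx.2⟩
      have h0 : 0 < M x := lt_of_lt_of_le hε hMx
      rw [norm_mul, norm_mul, Real.norm_eq_abs (M x)⁻¹, Real.norm_eq_abs ε⁻¹,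
        abs_of_pos (inv_pos.2 h0), abs_of_pos (inv_pos.2 hε)]
      exact mul_le_mul_of_nonneg_right (inv_anti₀ hε hMx) (norm_nonneg _)
    have hsmul : eLpNorm (fun x => ε⁻¹ * w x) 2 μ = (‖ε⁻¹‖₊ : ENNReal) * eLpNorm (⇑w) 2 μ := by
      have : (fun x => ε⁻¹ * w x) = ε⁻¹ • (⇑w) := by
        funext x; simp [smul_eq_mul]
      rw [this, eLpNorm_const_smul, enorm_eq_nnnorm]
    calc ‖Tinv w‖ = (eLpNorm (fun x => (M x)⁻¹ * w x) 2 μ).toReal := by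
          rw [Lp.norm_def, eLpNorm_congr_ae (hTinv w)]
      _ ≤ (eLpNorm (fun x => ε⁻¹ * w x) 2 μ).toReal := by
          refine ENNReal.toReal_mono ?_ (eLpNorm_mono_ae hb)
          rw [hsmul]
          exact ENNReal.mul_ne_top (by simp) (Lp.eLpNorm_ne_top w)
      _ = ε⁻¹ * ‖w‖ := by
          rw [hsmul, ENNReal.toReal_mul, Lp.norm_def, ENNReal.coe_toReal,
            coe_nnnorm, Real.norm_eq_abs, abs_of_pos (inv_pos.2 hε)]
  -- bound on ‖S‖
  have hS_norm : ‖S‖ ≤ c := by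
    refine ContinuousLinearMap.opNorm_le_bound _ hc fun w => ?_
    have hwInt : Integrable (⇑w) μ := (Lp.memLp w).integrable one_le_two
    obtain ⟨f, hf⟩ : ∃ f : ℝ → ℝ, f = ⇑w := ⟨⇑w, rfl⟩
    have hw01 : IntegrableOn (⇑w) (Set.Ioc 0 1) volume := by
      rw [← hf] at hwInt ⊢
      rwa [hμ] at hwInt
    set I : ℝ := ∫ y in Set.Ioc (0:ℝ) 1, ‖w y‖ with hIdef
    have hI0 : 0 ≤ I := setIntegral_nonneg measurableSet_Ioc fun y _ => norm_nonneg _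
    have hcw : IntegrableOn (fun y => c * ‖w y‖) (Set.Ioc 0 1) volume :=
      hw01.norm.const_mul c
    have hbound : ∀ᵐ x ∂μ, ‖(S w) x‖ ≤ c * I := by
      filter_upwards [hS w, hmem] with x hSx hx
      have hx0 : (0:ℝ) ≤ x := hx.1.le
      have hx1 : x ≤ 1 := hx.2
      have hxI : x ∈ Set.Icc (0:ℝ) 1 := ⟨hx0, hx1⟩
      have hw0x : IntegrableOn (⇑w) (Set.Ioc 0 x) volume :=
        hw01.mono_set (Set.Ioc_subset_Ioc_right hx1)
      have hwx1 : IntegrableOn (⇑w) (Set.Ioc x 1) volume :=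
        hw01.mono_set (Set.Ioc_subset_Ioc_left hx0)
      have hK₁int : IntegrableOn (fun y => K₁ x y * w y) (Set.Ioc 0 x) volume := by
        refine Integrable.bdd_mul (c := c) hw0x ((hK₁.comp (Continuous.prodMk_right x)).aestronglyMeasurable) ?_
        filter_upwards [ae_restrict_mem measurableSet_Ioc] with y hy
        exact hbd₁ x hxI y ⟨hy.1.le, hy.2.trans hx1⟩
      have hK₂int : IntegrableOn (fun y => K₂ x y * w y) (Set.Ioc x 1) volume := by
        refine Integrable.bdd_mul (c := c) hwx1 ((hK₂.comp (Continuous.prodMk_right x)).aestronglyMeasurable) ?_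
        filter_upwards [ae_restrict_mem measurableSet_Ioc] with y hy
        exact hbd₂ x hxI y ⟨(hx0.trans hy.1.le : (0:ℝ) ≤ y), hy.2⟩
      have hb1 : ‖∫ y in (0:ℝ)..x, K₁ x y * w y‖ ≤ ∫ y in Set.Ioc 0 x, c * ‖w y‖ := by
        rw [intervalIntegral.integral_of_le hx0]
        refine (MeasureTheory.norm_integral_le_integral_norm _).trans ?_
        refine setIntegral_mono_on hK₁int.norm
          (hcw.mono_set (Set.Ioc_subset_Ioc_right hx1)) measurableSet_Ioc fun y hy => ?_
        rw [norm_mul]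
        exact mul_le_mul_of_nonneg_right (hbd₁ x hxI y ⟨hy.1.le, hy.2.trans hx1⟩)
          (norm_nonneg _)
      have hb2 : ‖∫ y in x..(1:ℝ), K₂ x y * w y‖ ≤ ∫ y in Set.Ioc x 1, c * ‖w y‖ := by
        rw [intervalIntegral.integral_of_le hx1]
        refine (MeasureTheory.norm_integral_le_integral_norm _).trans ?_
        refine setIntegral_mono_on hK₂int.norm
          (hcw.mono_set (Set.Ioc_subset_Ioc_left hx0)) measurableSet_Ioc fun y hy => ?_
        rw [norm_mul]
        exact mul_le_mul_of_nonneg_right (hbd₂ x hxI y ⟨(hx0.trans hy.1.le), hy.2⟩)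
          (norm_nonneg _)
      have hsum : (∫ y in Set.Ioc 0 x, c * ‖w y‖) + (∫ y in Set.Ioc x 1, c * ‖w y‖)
          = ∫ y in Set.Ioc (0:ℝ) 1, c * ‖w y‖ := by
        rw [← Set.Ioc_union_Ioc_eq_Ioc hx0 hx1,
          setIntegral_union (Set.Ioc_disjoint_Ioc_of_le le_rfl) measurableSet_Ioc
            (hcw.mono_set (Set.Ioc_subset_Ioc_right hx1))
            (hcw.mono_set (Set.Ioc_subset_Ioc_left hx0))]
      have hcI : (∫ y in Set.Ioc (0:ℝ) 1, c * ‖w y‖) = c * I := by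
        rw [hIdef, ← MeasureTheory.integral_const_mul]
      rw [hSx]
      calc ‖(∫ y in (0:ℝ)..x, K₁ x y * w y) + ∫ y in x..(1:ℝ), K₂ x y * w y‖
          ≤ ‖∫ y in (0:ℝ)..x, K₁ x y * w y‖ + ‖∫ y in x..(1:ℝ), K₂ x y * w y‖ :=
            norm_add_le _ _
        _ ≤ (∫ y in Set.Ioc 0 x, c * ‖w y‖) + ∫ y in Set.Ioc x 1, c * ‖w y‖ :=
            add_le_add hb1 hb2
        _ = c * I := by rw [hsum, hcI]
    have huniv : (measureUnivNNReal μ : ℝ) = 1 := by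
      simp [measureUnivNNReal, measure_univ]
    have h1 : ‖S w‖ ≤ c * I := by
      have := Lp.norm_le_of_ae_bound (mul_nonneg hc hI0) hbound
      rwa [huniv, Real.one_rpow, one_mul] at this
    have hI_le : I ≤ ‖w‖ := by
      have hIμ : I = ∫ y, ‖w y‖ ∂μ := by
        rw [hIdef, ← hf, hμ]
      have hof : ENNReal.ofReal (∫ y, ‖w y‖ ∂μ) = eLpNorm (⇑w) 1 μ := by
        rw [ofReal_integral_norm_eq_lintegral_enorm hwInt, eLpNorm_one_eq_lintegral_enorm]
      have h2 : eLpNorm (⇑w) 1 μ ≤ eLpNorm (⇑w) 2 μ :=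
        eLpNorm_le_eLpNorm_of_exponent_le one_le_two (Lp.aestronglyMeasurable w)
      have hnn : 0 ≤ ∫ y, ‖w y‖ ∂μ := integral_nonneg fun y => norm_nonneg _
      rw [hIμ, Lp.norm_def, ← ENNReal.toReal_ofReal hnn]
      exact ENNReal.toReal_mono (Lp.eLpNorm_ne_top w) (hof ▸ h2)
    calc ‖S w‖ ≤ c * I := h1
      _ ≤ c * ‖w‖ := mul_le_mul_of_nonneg_left hI_le hc
  -- T and Tinv are mutually inverse
  have hT_Tinv : T * Tinv = 1 := by
    refine ContinuousLinearMap.ext fun w => ?_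
    rw [ContinuousLinearMap.mul_apply, ContinuousLinearMap.one_apply]
    refine Lp.ext ?_
    filter_upwards [hT (Tinv w), hTinv w, hmem] with x h1 h2 hx
    have hMx : M x ≠ 0 := (lt_of_lt_of_le hε (hMε x ⟨hx.1.le, hx.2⟩)).ne'
    rw [h1, h2, ← mul_assoc, mul_inv_cancel₀ hMx, one_mul]
  have hTinv_T : Tinv * T = 1 := by
    refine ContinuousLinearMap.ext fun w => ?_
    rw [ContinuousLinearMap.mul_apply, ContinuousLinearMap.one_apply]
    refine Lp.ext ?_
    filter_upwards [hTinv (T w), hT w, hmem] with x h1 h2 hx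
    have hMx : M x ≠ 0 := (lt_of_lt_of_le hε (hMε x ⟨hx.1.le, hx.2⟩)).ne'
    rw [h1, h2, ← mul_assoc, inv_mul_cancel₀ hMx, one_mul]
  -- Neumann series
  set A := Tinv * S with hA
  have hAnorm : ‖-A‖ < 1 := by
    rw [norm_neg]
    calc ‖A‖ ≤ ‖Tinv‖ * ‖S‖ := norm_mul_le _ _
      _ ≤ ε⁻¹ * c := mul_le_mul hTinv_norm hS_norm (norm_nonneg _) (inv_nonneg.2 hε.le)
      _ < ε⁻¹ * ε := mul_lt_mul_of_pos_left hcε (inv_pos.2 hε)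
      _ = 1 := inv_mul_cancel₀ hε.ne'
  have hgm : (∑' k : ℕ, (-A) ^ k) * (1 + A) = 1 := by
    have := geom_series_mul_neg (-A) hAnorm
    rwa [sub_neg_eq_add] at this
  have hmg : (1 + A) * (∑' k : ℕ, (-A) ^ k) = 1 := by
    have := mul_neg_geom_series (-A) hAnorm
    rwa [sub_neg_eq_add] at this
  refine ⟨(∑' k : ℕ, (-A) ^ k) * Tinv, ⟨?_, ?_⟩, rfl⟩
  · have hTS : T + S = T * (1 + A) := by
      rw [mul_add, mul_one, hA, ← mul_assoc, hT_Tinv, one_mul]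
    rw [hTS, mul_assoc, ← mul_assoc (1 + A), hmg, one_mul, hT_Tinv]
  · have hTinvTS : Tinv * (T + S) = 1 + A := by
      rw [mul_add, hTinv_T, hA]
    rw [mul_assoc, hTinvTS, hgm]
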